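/- Let K be a commutative ring in which p·1 = 0 for a prime p, and for k ≥ 0 let φ_k be the K-linear operator on K[X] given by φ_k(u) := Σ_{j=0}^{p-1} (-1)^j · X^{p^k·j} · D^{(p^k·j)}(u), where D^{(m)} is the m-th Hasse derivative. Then for every m ≥ 1 and every u ∈ K[X] of degree < p^m, the composition (φ_{m-1}∘⋯∘φ_1∘φ_0)(u) equals the constant polynomial whose value is the constant coefficient of u. Consequently (Taylor formula in prime characteristic, one variable): for every d, (φ_{m-1}∘⋯∘φ_0)(D^{(d)}(u)) is the constant polynomial with value coeff_d(u), and u = Σ_{d=0}^{p^m-1} (φ_{m-1}∘⋯∘φ_0)(D^{(d)}(u))·X^d. -/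

import Mathlib

open Polynomial

/-- The operator `φ_k : u ↦ ∑_{j=0}^{p-1} (-1)^j X^{p^k j} D^{(p^k j)}(u)` on `K[X]`. -/
noncomputable def phiOp {K : Type*} [CommRing K] (p k : ℕ) (u : Polynomial K) :
    Polynomial K :=
  ∑ j ∈ Finset.range p, (-1 : Polynomial K) ^ j * (X ^ (p ^ k * j) * hasseDeriv (p ^ k * j) u)

/-- The composition `φ_{m-1} ∘ ⋯ ∘ φ_1 ∘ φ_0` on `K[X]`. -/
noncomputable def phiComp {K : Type*} [CommRing K] (p : ℕ) : ℕ → Polynomial K → Polynomial K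
  | 0 => id
  | m + 1 => phiOp p m ∘ phiComp p m

lemma cast_eq_of_mod {K : Type*} [CommRing K] {p : ℕ} (hchar : (p : K) = 0) {a b : ℕ}
    (h : a % p = b % p) : (a : K) = (b : K) := by
  have key : ∀ n : ℕ, (n : K) = ((n % p : ℕ) : K) := by
    intro n
    conv_lhs => rw [← Nat.div_add_mod n p]
    push_cast [hchar]
    ring
  rw [key a, key b, h]

lemma lucas_digit {p : ℕ} (hp : p.Prime) (k d j : ℕ) (hj : j < p) :
    Nat.choose d (p ^ k * j) ≡ Nat.choose (d / p ^ k % p) j [MOD p] := by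
  haveI : Fact p.Prime := ⟨hp⟩
  induction k generalizing d with
  | zero =>
    simpa [Nat.mod_eq_of_lt hj, Nat.div_eq_of_lt hj] using
      (Choose.choose_modEq_choose_mod_mul_choose_div_nat (n := d) (k := j) (p := p))
  | succ k ih =>
    have hdvd : p ∣ p ^ (k + 1) * j := (dvd_pow_self p (Nat.succ_ne_zero k)).mul_right j
    have hmod : (p ^ (k + 1) * j) % p = 0 := by
      rw [pow_succ', mul_assoc, Nat.mul_mod_right]
    have hdiv : (p ^ (k + 1) * j) / p = p ^ k * j := by
      rw [pow_succ', mul_assoc, Nat.mul_div_cancel_left _ hp.pos]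
    have h1 := Choose.choose_modEq_choose_mod_mul_choose_div_nat
      (n := d) (k := p ^ (k + 1) * j) (p := p)
    rw [hmod, hdiv, Nat.choose_zero_right, one_mul] at h1
    refine h1.trans ((ih (d / p)).trans ?_)
    rw [Nat.div_div_eq_div_mul, ← pow_succ']

lemma alt_sum {K : Type*} [CommRing K] {p : ℕ} (hp : p.Prime) (hchar : (p : K) = 0)
    (k d : ℕ) :
    ∑ j ∈ Finset.range p, (-1 : K) ^ j * (Nat.choose d (p ^ k * j) : K)
      = if d / p ^ k % p = 0 then 1 else 0 := by
  set e := d / p ^ k % p with he_def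
  have he : e < p := Nat.mod_lt _ hp.pos
  have step : ∀ j ∈ Finset.range p,
      (-1 : K) ^ j * (Nat.choose d (p ^ k * j) : K) = (-1 : K) ^ j * (Nat.choose e j : K) := by
    intro j hj
    rw [cast_eq_of_mod hchar (lucas_digit hp k d j (Finset.mem_range.mp hj))]
  rw [Finset.sum_congr rfl step]
  have htrim : ∑ j ∈ Finset.range p, (-1 : K) ^ j * (Nat.choose e j : K)
      = ∑ j ∈ Finset.range (e + 1), (-1 : K) ^ j * (Nat.choose e j : K) := by
    refine (Finset.sum_subset (Finset.range_subset_range.mpr he) ?_).symm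
    intro x _ hx
    rw [Nat.choose_eq_zero_of_lt (by simpa using hx)]
    simp
  rw [htrim]
  have h2 : ((∑ i ∈ Finset.range (e + 1), (-1 : ℤ) ^ i * (Nat.choose e i : ℤ) : ℤ) : K)
      = ((if e = 0 then 1 else 0 : ℤ) : K) := by
    rw [Int.alternating_sum_range_choose]
  push_cast at h2
  rw [h2]

lemma phiOp_monomial {K : Type*} [CommRing K] {p : ℕ} (hp : p.Prime) (hchar : (p : K) = 0)
    (k d : ℕ) (r : K) :
    phiOp p k (monomial d r) = if d / p ^ k % p = 0 then monomial d r else 0 := by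
  have term : ∀ j : ℕ, (-1 : Polynomial K) ^ j *
      (X ^ (p ^ k * j) * hasseDeriv (p ^ k * j) (monomial d r))
      = monomial d ((-1 : K) ^ j * ((Nat.choose d (p ^ k * j) : K) * r)) := by
    intro j
    rw [hasseDeriv_monomial]
    by_cases h : p ^ k * j ≤ d
    · rw [X_pow_mul_monomial, Nat.sub_add_cancel h]
      have : (-1 : Polynomial K) ^ j = C ((-1 : K) ^ j) := by
        rw [map_pow, map_neg, map_one]
      rw [this, C_mul_monomial]
    · rw [Nat.choose_eq_zero_of_lt (lt_of_not_ge h)]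
      simp
  rw [phiOp]
  simp_rw [term]
  rw [← map_sum (monomial d), Finset.sum_congr rfl (fun j _ => (mul_assoc _ _ _).symm),
    ← Finset.sum_mul, alt_sum hp hchar k d]
  split_ifs <;> simp

lemma phiOp_zero {K : Type*} [CommRing K] (p k : ℕ) : phiOp p k (0 : Polynomial K) = 0 := by
  simp [phiOp]

lemma phiOp_add {K : Type*} [CommRing K] (p k : ℕ) (u v : Polynomial K) :
    phiOp p k (u + v) = phiOp p k u + phiOp p k v := by
  simp [phiOp, map_add, mul_add, Finset.sum_add_distrib]

lemma phiComp_zero {K : Type*} [CommRing K] (p m : ℕ) : phiComp p m (0 : Polynomial K) = 0 := by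
  induction m with
  | zero => rfl
  | succ m ih => simp [phiComp, ih, phiOp_zero]

lemma phiComp_add {K : Type*} [CommRing K] (p m : ℕ) (u v : Polynomial K) :
    phiComp p m (u + v) = phiComp p m u + phiComp p m v := by
  induction m generalizing u v with
  | zero => rfl
  | succ m ih => simp [phiComp, ih, phiOp_add]

lemma phiComp_sum {K : Type*} [CommRing K] (p m : ℕ) {ι : Type*} (s : Finset ι)
    (f : ι → Polynomial K) :
    phiComp p m (∑ i ∈ s, f i) = ∑ i ∈ s, phiComp p m (f i) := by
  classical
  induction s using Finset.induction_on with
  | empty => simp [phiComp_zero]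
  | insert _ _ hnot ih => simp [Finset.sum_insert hnot, phiComp_add, ih]

open Classical in
lemma phiComp_monomial {K : Type*} [CommRing K] {p : ℕ} (hp : p.Prime) (hchar : (p : K) = 0)
    (m d : ℕ) (r : K) :
    phiComp p m (monomial d r) = if ∀ k < m, d / p ^ k % p = 0 then monomial d r else 0 := by
  induction m with
  | zero => simp [phiComp]
  | succ m ih =>
    show phiOp p m (phiComp p m (monomial d r)) = _
    rw [ih]
    by_cases h : ∀ k < m, d / p ^ k % p = 0
    · rw [if_pos h, phiOp_monomial hp hchar]
      by_cases h2 : d / p ^ m % p = 0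
      · rw [if_pos h2, if_pos]
        intro k hk
        rcases Nat.lt_succ_iff_lt_or_eq.mp hk with hk | hk
        · exact h k hk
        · rw [hk]; exact h2
      · rw [if_neg h2, if_neg]
        intro hall
        exact h2 (hall m (Nat.lt_succ_self m))
    · rw [if_neg h, phiOp_zero, if_neg]
      intro hall
      exact h fun k hk => hall k (hk.trans (Nat.lt_succ_self m))

lemma digits_zero_dvd {p : ℕ} (hp : p.Prime) (m d : ℕ)
    (h : ∀ k < m, d / p ^ k % p = 0) : p ^ m ∣ d := by
  induction m with
  | zero => simp
  | succ m ih =>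
    obtain ⟨t, ht⟩ := ih fun k hk => h k (hk.trans (Nat.lt_succ_self m))
    have hm : d / p ^ m % p = 0 := h m (Nat.lt_succ_self m)
    rw [ht, Nat.mul_div_cancel_left _ (pow_pos hp.pos m)] at hm
    obtain ⟨s, hs⟩ := Nat.dvd_of_mod_eq_zero hm
    exact ⟨s, by rw [ht, hs, pow_succ, mul_assoc]⟩

/-- Let `K` be a commutative ring with `p·1 = 0` for a prime `p`.  Then
for every `m ≥ 1` and every `u ∈ K[X]` of degree `< p^m`, the composition
`(φ_{m-1}∘⋯∘φ_0)(u)` is the constant polynomial whose value is the constant coefficient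
of `u`.  Consequently (Taylor formula in prime characteristic, one variable): for every
`d`, `(φ_{m-1}∘⋯∘φ_0)(D^{(d)}(u))` is the constant polynomial with value `coeff d u`, and
`u = ∑_{d=0}^{p^m - 1} (φ_{m-1}∘⋯∘φ_0)(D^{(d)}(u))·X^d`. -/
theorem stmt_18 {K : Type*} [CommRing K] (p : ℕ) (hp : p.Prime) (hchar : (p : K) = 0)
    (m : ℕ) (hm : 1 ≤ m) :
    (∀ u : Polynomial K, u.natDegree < p ^ m →
      phiComp p m u = C (u.coeff 0)) ∧
    (∀ u : Polynomial K, u.natDegree < p ^ m → ∀ d : ℕ,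
      phiComp p m (hasseDeriv d u) = C (u.coeff d)) ∧
    (∀ u : Polynomial K, u.natDegree < p ^ m →
      u = ∑ d ∈ Finset.range (p ^ m), phiComp p m (hasseDeriv d u) * X ^ d) := by
  classical
  have part1 : ∀ u : Polynomial K, u.natDegree < p ^ m → phiComp p m u = C (u.coeff 0) := by
    intro u hu
    conv_lhs => rw [u.as_sum_range' (p ^ m) hu]
    rw [phiComp_sum]
    rw [Finset.sum_eq_single_of_mem 0 (Finset.mem_range.mpr (pow_pos hp.pos m))]
    · rw [phiComp_monomial hp hchar, if_pos (by intro k hk; simp)]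
      exact (monomial_zero_left (a := u.coeff 0))
    · intro i hi hi0
      rw [phiComp_monomial hp hchar, if_neg]
      intro hall
      exact hi0 (Nat.eq_zero_of_dvd_of_lt (digits_zero_dvd hp m i hall)
        (Finset.mem_range.mp hi))
  have part2 : ∀ u : Polynomial K, u.natDegree < p ^ m → ∀ d : ℕ,
      phiComp p m (hasseDeriv d u) = C (u.coeff d) := by
    intro u hu d
    have hdeg : (hasseDeriv d u).natDegree < p ^ m :=
      lt_of_le_of_lt ((natDegree_hasseDeriv_le u d).trans (Nat.sub_le _ _)) hu
    rw [part1 _ hdeg, hasseDeriv_coeff]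
    simp
  refine ⟨part1, part2, ?_⟩
  intro u hu
  rw [Finset.sum_congr rfl fun d _ => by rw [part2 u hu d]]
  conv_lhs => rw [u.as_sum_range' (p ^ m) hu]
  exact Finset.sum_congr rfl fun d _ => (C_mul_X_pow_eq_monomial).symm
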